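/- Let Ψ > 0 and let B₅, B₆ be real numbers. Then, as h → +∞, the difference F(h, B₅) − F(h, B₆) converges to (1/2)·ln((Ψ² + B₆²)/(Ψ² + B₅²)) + (B₅/Ψ)·arctan(B₅/Ψ) − (B₆/Ψ)·arctan(B₆/Ψ). -/

import Mathlib

open Real Filter

/-- `F(x, y) := arcsinh(x/√(Ψ² + y²)) + (y/Ψ)·arctan(x·y/(Ψ·√(Ψ² + x² + y²)))`. -/
noncomputable def F (Ψ x y : ℝ) : ℝ :=
  Real.arsinh (x / Real.sqrt (Ψ ^ 2 + y ^ 2)) +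
    (y / Ψ) * Real.arctan (x * y / (Ψ * Real.sqrt (Ψ ^ 2 + x ^ 2 + y ^ 2)))

lemma lim1 (a : ℝ) (ha : 0 < a) :
    Filter.Tendsto (fun h : ℝ => Real.arsinh (h / a) - Real.log h) atTop
      (nhds (Real.log (2 / a))) := by
  have h0 : Tendsto (fun h : ℝ => a / h) atTop (nhds 0) :=
    tendsto_const_nhds.div_atTop tendsto_id
  have h1 : Tendsto (fun h : ℝ => 1 + (a / h) ^ 2) atTop (nhds 1) := by
    simpa using tendsto_const_nhds.add (h0.pow 2)
  have h2 : Tendsto (fun h : ℝ => Real.sqrt (1 + (a / h) ^ 2)) atTop (nhds 1) := by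
    have := (Real.continuous_sqrt.tendsto 1).comp h1
    simpa [Function.comp_def] using this
  have h3 : Tendsto (fun h : ℝ => 1 + Real.sqrt (1 + (a / h) ^ 2)) atTop (nhds 2) := by
    have := (tendsto_const_nhds : Tendsto (fun _ : ℝ => (1:ℝ)) atTop (nhds 1)).add h2
    norm_num at this
    exact this
  have hg : Tendsto (fun h : ℝ => (1 + Real.sqrt (1 + (a / h) ^ 2)) / a) atTop
      (nhds (2 / a)) := h3.div_const a
  have hlog : Tendsto (fun h : ℝ => Real.log ((1 + Real.sqrt (1 + (a / h) ^ 2)) / a)) atTop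
      (nhds (Real.log (2 / a))) := hg.log (by positivity)
  refine hlog.congr' ?_
  filter_upwards [eventually_gt_atTop (0 : ℝ)] with h hh
  have ha' : a ≠ 0 := ha.ne'
  have hh' : h ≠ 0 := hh.ne'
  have e1 : Real.sqrt (1 + (h / a) ^ 2) = Real.sqrt (a ^ 2 + h ^ 2) / a := by
    rw [show (1 + (h / a) ^ 2) = (a ^ 2 + h ^ 2) / a ^ 2 by field_simp,
      Real.sqrt_div (by positivity), Real.sqrt_sq ha.le]
  have e2 : Real.sqrt (1 + (a / h) ^ 2) = Real.sqrt (a ^ 2 + h ^ 2) / h := by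
    rw [show (1 + (a / h) ^ 2) = (a ^ 2 + h ^ 2) / h ^ 2 by field_simp; ring,
      Real.sqrt_div (by positivity), Real.sqrt_sq hh.le]
  have hs : 0 ≤ Real.sqrt (a ^ 2 + h ^ 2) := Real.sqrt_nonneg _
  rw [Real.arsinh, e1, e2]
  have key : h / a + Real.sqrt (a ^ 2 + h ^ 2) / a
      = h * ((1 + Real.sqrt (a ^ 2 + h ^ 2) / h) / a) := by
    field_simp
  rw [key, Real.log_mul hh' (by positivity)]
  ring

lemma lim2 (Ψ y : ℝ) (hΨ : 0 < Ψ) :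
    Filter.Tendsto (fun h : ℝ => h * y / (Ψ * Real.sqrt (Ψ ^ 2 + h ^ 2 + y ^ 2))) atTop
      (nhds (y / Ψ)) := by
  have h0 : Tendsto (fun h : ℝ => (Ψ ^ 2 + y ^ 2) / h ^ 2) atTop (nhds 0) :=
    tendsto_const_nhds.div_atTop (tendsto_pow_atTop two_ne_zero)
  have h1 : Tendsto (fun h : ℝ => (Ψ ^ 2 + y ^ 2) / h ^ 2 + 1) atTop (nhds 1) := by
    simpa using h0.add tendsto_const_nhds
  have h2 : Tendsto (fun h : ℝ => Real.sqrt ((Ψ ^ 2 + y ^ 2) / h ^ 2 + 1)) atTop (nhds 1) := by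
    have := (Real.continuous_sqrt.tendsto 1).comp h1
    simpa [Function.comp_def] using this
  have hg : Tendsto (fun h : ℝ => y / (Ψ * Real.sqrt ((Ψ ^ 2 + y ^ 2) / h ^ 2 + 1))) atTop
      (nhds (y / Ψ)) := by
    have hd : Tendsto (fun h : ℝ => Ψ * Real.sqrt ((Ψ ^ 2 + y ^ 2) / h ^ 2 + 1)) atTop
        (nhds Ψ) := by
      have := (tendsto_const_nhds : Tendsto (fun _ : ℝ => Ψ) atTop (nhds Ψ)).mul h2
      simpa using this
    exact (tendsto_const_nhds : Tendsto (fun _ : ℝ => y) atTop (nhds y)).div hd hΨ.ne'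
  refine hg.congr' ?_
  filter_upwards [eventually_gt_atTop (0 : ℝ)] with h hh
  have e : Real.sqrt (Ψ ^ 2 + h ^ 2 + y ^ 2)
      = h * Real.sqrt ((Ψ ^ 2 + y ^ 2) / h ^ 2 + 1) := by
    rw [← Real.sqrt_sq hh.le, ← Real.sqrt_mul (by positivity)]
    congr 1
    rw [Real.sq_sqrt (sq_nonneg h)]
    field_simp
    ring
  rw [e]
  have hs : 0 < Real.sqrt ((Ψ ^ 2 + y ^ 2) / h ^ 2 + 1) := Real.sqrt_pos.2 (by positivity)
  field_simp

theorem stmt_11 (Ψ B₅ B₆ : ℝ) (hΨ : 0 < Ψ) :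
    Filter.Tendsto (fun h : ℝ => F Ψ h B₅ - F Ψ h B₆) Filter.atTop
      (nhds ((1 / 2) * Real.log ((Ψ ^ 2 + B₆ ^ 2) / (Ψ ^ 2 + B₅ ^ 2))
        + (B₅ / Ψ) * Real.arctan (B₅ / Ψ) - (B₆ / Ψ) * Real.arctan (B₆ / Ψ))) := by
  set a₅ := Real.sqrt (Ψ ^ 2 + B₅ ^ 2) with ha₅
  set a₆ := Real.sqrt (Ψ ^ 2 + B₆ ^ 2) with ha₆
  have ha₅' : 0 < a₅ := Real.sqrt_pos.2 (by positivity)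
  have ha₆' : 0 < a₆ := Real.sqrt_pos.2 (by positivity)
  have t5 : Tendsto (fun h : ℝ => Real.arctan (h * B₅ / (Ψ * Real.sqrt (Ψ ^ 2 + h ^ 2 + B₅ ^ 2))))
      atTop (nhds (Real.arctan (B₅ / Ψ))) :=
    (Real.continuous_arctan.tendsto _).comp (lim2 Ψ B₅ hΨ)
  have t6 : Tendsto (fun h : ℝ => Real.arctan (h * B₆ / (Ψ * Real.sqrt (Ψ ^ 2 + h ^ 2 + B₆ ^ 2))))
      atTop (nhds (Real.arctan (B₆ / Ψ))) :=
    (Real.continuous_arctan.tendsto _).comp (lim2 Ψ B₆ hΨ)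
  have T : Tendsto (fun h : ℝ =>
      ((Real.arsinh (h / a₅) - Real.log h) - (Real.arsinh (h / a₆) - Real.log h))
      + ((B₅ / Ψ) * Real.arctan (h * B₅ / (Ψ * Real.sqrt (Ψ ^ 2 + h ^ 2 + B₅ ^ 2)))
        - (B₆ / Ψ) * Real.arctan (h * B₆ / (Ψ * Real.sqrt (Ψ ^ 2 + h ^ 2 + B₆ ^ 2))))) atTop
      (nhds ((Real.log (2 / a₅) - Real.log (2 / a₆))
        + ((B₅ / Ψ) * Real.arctan (B₅ / Ψ) - (B₆ / Ψ) * Real.arctan (B₆ / Ψ)))) :=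
    ((lim1 a₅ ha₅').sub (lim1 a₆ ha₆')).add
      ((t5.const_mul (B₅ / Ψ)).sub (t6.const_mul (B₆ / Ψ)))
  have hval : Real.log (2 / a₅) - Real.log (2 / a₆)
      = (1 / 2) * Real.log ((Ψ ^ 2 + B₆ ^ 2) / (Ψ ^ 2 + B₅ ^ 2)) := by
    rw [Real.log_div two_ne_zero ha₅'.ne', Real.log_div two_ne_zero ha₆'.ne',
      ha₅, ha₆, Real.log_sqrt (by positivity), Real.log_sqrt (by positivity),
      Real.log_div (by positivity) (by positivity)]
    ring
  rw [hval, ← add_sub_assoc] at T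
  refine T.congr (fun h => ?_)
  simp only [F]
  ring
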